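/- There exists R > 0 such that every solution of the Lorenz system is ultimately trapped in the ball of radius R about c = (0, 0, 38): if f : ℝ → ℝ³ is differentiable with f′(t) = F(f(t)) for all t, then there exists T such that ‖f(t) − c‖ ≤ R for all t ≥ T. -/

import Mathlib

/-- The Lorenz vector field `F(x, y, z) = (10(y − x), 28x − y − xz, xy − (8/3)z)`
on `ℝ³` (with classical parameters σ = 10, ρ = 28, β = 8/3). -/
noncomputable def lorenzField (p : EuclideanSpace ℝ (Fin 3)) : EuclideanSpace ℝ (Fin 3) :=
  (WithLp.equiv 2 (Fin 3 → ℝ)).symm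
    ![10 * (p 1 - p 0), 28 * p 0 - p 1 - p 0 * p 2, p 0 * p 1 - (8 / 3) * p 2]

/-- The center `c = (0, 0, 38)` of Lorenz's trapping ball. -/
noncomputable def lorenzCenter : EuclideanSpace ℝ (Fin 3) :=
  (WithLp.equiv 2 (Fin 3 → ℝ)).symm ![0, 0, 38]

/-- Key pointwise inequality: `2⟪p - c, F(p)⟫ ≤ -2‖p - c‖² + 3100`. -/
lemma lorenz_key (p : EuclideanSpace ℝ (Fin 3)) :
    2 * (inner ℝ (p - lorenzCenter) (lorenzField p) : ℝ) ≤
      -2 * (inner ℝ (p - lorenzCenter) (p - lorenzCenter) : ℝ) + 3100 := by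
  rw [PiLp.inner_apply, PiLp.inner_apply, Fin.sum_univ_three, Fin.sum_univ_three]
  simp only [lorenzField, lorenzCenter, PiLp.sub_apply, WithLp.equiv_symm_apply, PiLp.toLp_apply,
    Matrix.cons_val_zero, Matrix.cons_val_one, Matrix.head_cons,
    Matrix.cons_val_two, Matrix.tail_cons, RCLike.inner_apply, conj_trivial]
  nlinarith [sq_nonneg (p 0), sq_nonneg (p 1), sq_nonneg (p 2 - 38 + 152/5)]

/-- There exists `R > 0` such that every solution of the Lorenz system is
ultimately trapped in the ball of radius `R` about `c = (0, 0, 38)`: for every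
solution `f` there is a time `T` with `‖f(t) − c‖ ≤ R` for all `t ≥ T`. -/
theorem lorenz_solutions_ultimately_trapped :
    ∃ R > (0 : ℝ), ∀ f : ℝ → EuclideanSpace ℝ (Fin 3),
      (∀ t : ℝ, HasDerivAt f (lorenzField (f t)) t) →
      ∃ T : ℝ, ∀ t : ℝ, T ≤ t → ‖f t - lorenzCenter‖ ≤ R := by
  refine ⟨40, by norm_num, fun f hf => ?_⟩
  set c := lorenzCenter
  set u : ℝ → EuclideanSpace ℝ (Fin 3) := fun t => f t - c with hu
  set V : ℝ → ℝ := fun t => (inner ℝ (u t) (u t) : ℝ) with hV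
  -- derivative of V
  have hu' : ∀ t, HasDerivAt u (lorenzField (f t)) t := fun t => (hf t).sub_const c
  have hV' : ∀ t, HasDerivAt V
      ((inner ℝ (u t) (lorenzField (f t)) : ℝ) + (inner ℝ (lorenzField (f t)) (u t) : ℝ)) t :=
    fun t => (hu' t).inner ℝ (hu' t)
  have hVsymm : ∀ t, (inner ℝ (u t) (lorenzField (f t)) : ℝ) + (inner ℝ (lorenzField (f t)) (u t) : ℝ)
      = 2 * (inner ℝ (u t) (lorenzField (f t)) : ℝ) := by
    intro t; rw [real_inner_comm (lorenzField (f t)) (u t)]; ring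
  -- the auxiliary monotone function g t = (V t - 1550) * exp (2t)
  set g : ℝ → ℝ := fun t => (V t - 1550) * Real.exp (2 * t) with hg
  have hexp : ∀ t : ℝ, HasDerivAt (fun s : ℝ => Real.exp (2 * s)) (Real.exp (2 * t) * 2) t := by
    intro t
    simpa using ((hasDerivAt_id t).const_mul 2).exp
  have hg' : ∀ t, HasDerivAt g
      ((2 * (inner ℝ (u t) (lorenzField (f t)) : ℝ)) * Real.exp (2 * t)
        + (V t - 1550) * (Real.exp (2 * t) * 2)) t := by
    intro t
    have := (((hV' t)).sub_const 1550).mul (hexp t)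
    rw [hVsymm t] at this
    exact this
  have hgle : ∀ t, (2 * (inner ℝ (u t) (lorenzField (f t)) : ℝ)) * Real.exp (2 * t)
      + (V t - 1550) * (Real.exp (2 * t) * 2) ≤ 0 := by
    intro t
    have h1 := lorenz_key (f t)
    have h2 : (0 : ℝ) < Real.exp (2 * t) := Real.exp_pos _
    have h3 : 2 * (inner ℝ (u t) (lorenzField (f t)) : ℝ) ≤ -2 * V t + 3100 := h1
    nlinarith
  have hanti : Antitone g := antitone_of_hasDerivAt_nonpos hg' hgle
  -- choose T
  obtain ⟨T, hT0, hT⟩ : ∃ T : ℝ, 0 ≤ T ∧ g 0 ≤ Real.exp (2 * T) := by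
    refine ⟨|g 0| / 2 + 1, by positivity, ?_⟩
    have := Real.add_one_le_exp (2 * (|g 0| / 2 + 1))
    have := le_abs_self (g 0)
    linarith
  refine ⟨T, fun t ht => ?_⟩
  -- V t ≤ 1551 for t ≥ T
  have hmono : g t ≤ g 0 := hanti (le_trans hT0 ht)
  have hVt : V t ≤ 1551 := by
    have hexppos : (0 : ℝ) < Real.exp (2 * t) := Real.exp_pos _
    have hTt : Real.exp (2 * T) ≤ Real.exp (2 * t) := Real.exp_le_exp.2 (by linarith)
    have : (V t - 1550) * Real.exp (2 * t) ≤ Real.exp (2 * t) := le_trans hmono (le_trans hT hTt)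
    nlinarith
  -- conclude
  have hnorm : ‖u t‖ ^ 2 ≤ 1551 := by
    rwa [← real_inner_self_eq_norm_sq]
  nlinarith [norm_nonneg (u t), hnorm]
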